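/- Assume E|Z| < ∞, Condition 1, and that γ(x) = c(E[Z] − x) for some c > 0. Then for every Lipschitz-continuous test function h on the closure of (a,b) and every x in (a,b): (a) ‖g_h‖ ≤ ‖h'‖/c; (b) |g_h'(x)| ≤ 2c·‖h'‖ · ( ∫_a^x F(s) ds ) · ( ∫_x^b (1 − F(t)) dt ) / ( η(x)²·p(x) ). -/

import Mathlib

open MeasureTheory Set Filter Topology

noncomputable section

/-- The open interval `(a,b)` with extended-real endpoints, viewed as a set of reals. -/
def ooE (a b : EReal) : Set ℝ := {x : ℝ | a < (x : EReal) ∧ (x : EReal) < b}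

/-- The closed interval `[a,b] ∩ ℝ` (the closure of `(a,b)` in `ℝ`). -/
def ccE (a b : EReal) : Set ℝ := {x : ℝ | a ≤ (x : EReal) ∧ (x : EReal) ≤ b}

/-- The filter on `ℝ` of right-neighbourhoods of the (possibly infinite) endpoint `a`:
for finite `a` this is `𝓝[>] a`, for `a = ⊥` it is `atBot`. -/
def nhdsGT (a : EReal) : Filter ℝ :=
  Filter.comap (fun x : ℝ => (x : EReal)) (nhdsWithin a (Set.Ioi a))

/-- The filter on `ℝ` of left-neighbourhoods of the (possibly infinite) endpoint `b`. -/
def nhdsLT (b : EReal) : Filter ℝ :=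
  Filter.comap (fun x : ℝ => (x : EReal)) (nhdsWithin b (Set.Iio b))

/-- `f` is (locally) an indefinite integral of `f'` on `s`. -/
def IsLocACOn (f f' : ℝ → ℝ) (s : Set ℝ) : Prop :=
  ∀ x ∈ s, ∀ y ∈ s, IntervalIntegrable f' volume x y ∧ f y - f x = ∫ t in x..y, f' t

/-- `f` is locally absolutely continuous on `s`. -/
def LocACOn (f : ℝ → ℝ) (s : Set ℝ) : Prop := ∃ f', IsLocACOn f f' s

/-- Condition 1: `p` is a probability density which is positive and locally absolutely
continuous on `(a,b)` and vanishes outside of `(a,b)`. -/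
structure Cond1 (a b : EReal) (p : ℝ → ℝ) : Prop where
  lt : a < b
  meas : Measurable p
  nonneg : ∀ x, 0 ≤ p x
  pos : ∀ x ∈ ooE a b, 0 < p x
  zero : ∀ x, x ∉ ooE a b → p x = 0
  integrable : MeasureTheory.Integrable p
  total : ∫ x, p x = 1
  locAC : LocACOn p (ooE a b)

/-- Condition 2: `γ` is Borel measurable, not identically zero, decreasing on `[a,b]`,
with `E|γ(Z)| < ∞` and `E[γ(Z)] = 0`. -/
structure Cond2 (a b : EReal) (p γ : ℝ → ℝ) : Prop where
  meas : Measurable γ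
  ne_zero : ∃ x ∈ ccE a b, γ x ≠ 0
  anti : AntitoneOn γ (ccE a b)
  integrable : MeasureTheory.Integrable (fun x => γ x * p x)
  mean_zero : ∫ x, γ x * p x = 0

/-- `I(x) = ∫_a^x γ(t) p(t) dt` (the density vanishes outside `(a,b)`). -/
def Ifun (γ p : ℝ → ℝ) (x : ℝ) : ℝ := ∫ t in Iic x, γ t * p t

/-- The distribution function `F` of the density `p`. -/
def Ffun (p : ℝ → ℝ) (x : ℝ) : ℝ := ∫ t in Iic x, p t

/-- `η = I/p`. -/
def etaFun (γ p : ℝ → ℝ) (x : ℝ) : ℝ := Ifun γ p x / p x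

/-- `x₀ = sup {x ∈ (a,b) : γ(x) > 0}`. -/
def xZero (a b : EReal) (γ : ℝ → ℝ) : ℝ := sSup {x | x ∈ ooE a b ∧ 0 < γ x}

/-- `E[h(Z)]` for `Z` with density `p`. -/
def meanOf (p h : ℝ → ℝ) : ℝ := ∫ x, h x * p x

/-- The standard solution `g_h` of the Stein equation `η g' + γ g = h - E[h(Z)]`. -/
def gsol (γ p h : ℝ → ℝ) (x : ℝ) : ℝ :=
  (∫ t in Iic x, (h t - meanOf p h) * p t) / (p x * etaFun γ p x)

/-- The derivative of the standard solution, defined everywhere via the Stein equation. -/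
def gsol' (γ p h : ℝ → ℝ) (x : ℝ) : ℝ :=
  (h x - meanOf p h - γ x * gsol γ p h x) / etaFun γ p x

lemma pos_aux {f : ℝ → ℝ} {S : Set ℝ} (hS : MeasurableSet S) (hfi : IntegrableOn f S)
    (hnn : ∀ t ∈ S, 0 ≤ f t) {u v : ℝ} (huv : u < v) (hsub : Ioo u v ⊆ S)
    (hfpos : ∀ t ∈ Ioo u v, 0 < f t) : 0 < ∫ t in S, f t := by
  rw [setIntegral_pos_iff_support_of_nonneg_ae ((ae_restrict_iff' hS).2 (ae_of_all _ hnn)) hfi]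
  refine lt_of_lt_of_le ?_ (measure_mono (fun t ht => ⟨ne_of_gt (hfpos t ht), hsub ht⟩))
  rw [Real.volume_Ioo]
  exact ENNReal.ofReal_pos.2 (by linarith)

lemma fubini_Iic (x : ℝ) (p : ℝ → ℝ) (hm : Measurable p) (hnn : ∀ t, 0 ≤ p t)
    (hi : Integrable p) :
    ∫ s in Iic x, (x - s) * p s = ∫ u in Iic x, (∫ t in Iic u, p t) := by
  have hFnn : ∀ u, 0 ≤ ∫ t in Iic u, p t := fun u =>
    setIntegral_nonneg measurableSet_Iic (fun t _ => hnn t)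
  have hFmono : Monotone (fun u => ∫ t in Iic u, p t) := fun u v huv =>
    setIntegral_mono_set hi.integrableOn (ae_of_all _ hnn)
      (HasSubset.Subset.eventuallyLE (Iic_subset_Iic.2 huv))
  rw [integral_eq_lintegral_of_nonneg_ae (f := fun s => (x - s) * p s)
      ((ae_restrict_iff' measurableSet_Iic).2 (ae_of_all _ fun s hs =>
        mul_nonneg (by simp only [mem_Iic] at hs; linarith) (hnn s)))
      (((measurable_const.sub measurable_id').mul hm).aestronglyMeasurable),
    integral_eq_lintegral_of_nonneg_ae (ae_of_all _ hFnn)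
      (hFmono.measurable.aestronglyMeasurable)]
  congr 1
  calc ∫⁻ s in Iic x, ENNReal.ofReal ((x - s) * p s)
      = ∫⁻ s in Iic x, ∫⁻ u in Iic x, (Ioi s).indicator (fun _ => ENNReal.ofReal (p s)) u := by
        refine setLIntegral_congr_fun measurableSet_Iic (fun s hs => ?_)
        rw [lintegral_indicator measurableSet_Ioi, setLIntegral_const,
          Measure.restrict_apply measurableSet_Ioi]
        have : Ioi s ∩ Iic x = Ioc s x := by ext t; simp [mem_Ioc, and_comm]
        rw [this, Real.volume_Ioc, ← ENNReal.ofReal_mul (hnn s), mul_comm]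
    _ = ∫⁻ u in Iic x, ∫⁻ s in Iic x, (Ioi s).indicator (fun _ => ENNReal.ofReal (p s)) u := by
        refine lintegral_lintegral_swap ?_
        have : (Function.uncurry fun s u => (Ioi s).indicator (fun _ => ENNReal.ofReal (p s)) u)
            = {q : ℝ × ℝ | q.1 < q.2}.indicator (fun q => ENNReal.ofReal (p q.1)) := by
          funext q
          simp [Function.uncurry, Set.indicator_apply, mem_Ioi]
        rw [this]
        exact ((ENNReal.measurable_ofReal.comp (hm.comp measurable_fst)).indicator
          (measurableSet_lt measurable_fst measurable_snd)).aemeasurable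
    _ = ∫⁻ u in Iic x, ENNReal.ofReal (∫ t in Iic u, p t) := by
        refine setLIntegral_congr_fun measurableSet_Iic (fun u hu => ?_)
        have h1 : ∀ s, (Ioi s).indicator (fun _ => ENNReal.ofReal (p s)) u
            = (Iio u).indicator (fun s => ENNReal.ofReal (p s)) s := by
          intro s; simp [Set.indicator_apply, mem_Ioi, mem_Iio]
        simp_rw [h1]
        rw [lintegral_indicator measurableSet_Iio, Measure.restrict_restrict measurableSet_Iio,
          inter_eq_self_of_subset_left (subset_trans Iio_subset_Iic_self (Iic_subset_Iic.2 hu)),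
          setLIntegral_congr (Iio_ae_eq_Iic (a := u)),
          ← ofReal_integral_eq_lintegral_ofReal hi.integrableOn (ae_of_all _ hnn)]

lemma fubini_Ioi (x : ℝ) (p : ℝ → ℝ) (hm : Measurable p) (hnn : ∀ t, 0 ≤ p t)
    (hi : Integrable p) (htot : ∫ t, p t = 1) :
    ∫ s in Ioi x, (s - x) * p s = ∫ u in Ioi x, (1 - ∫ t in Iic u, p t) := by
  have hGnn : ∀ u, 0 ≤ ∫ t in Ioi u, p t := fun u =>
    setIntegral_nonneg measurableSet_Ioi (fun t _ => hnn t)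
  have hsplit : ∀ u, (1 : ℝ) - ∫ t in Iic u, p t = ∫ t in Ioi u, p t := by
    intro u
    have := intervalIntegral.integral_Iic_add_Ioi (b := u) hi.integrableOn hi.integrableOn
    rw [htot] at this; linarith
  have hGanti : Antitone (fun u => ∫ t in Ioi u, p t) := fun u v huv =>
    setIntegral_mono_set hi.integrableOn (ae_of_all _ hnn)
      (HasSubset.Subset.eventuallyLE (Ioi_subset_Ioi huv))
  rw [integral_congr_ae (g := fun u => ∫ t in Ioi u, p t) (ae_of_all _ fun u => hsplit u)]
  rw [integral_eq_lintegral_of_nonneg_ae (f := fun s => (s - x) * p s)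
      ((ae_restrict_iff' measurableSet_Ioi).2 (ae_of_all _ fun s hs =>
        mul_nonneg (by simp only [mem_Ioi] at hs; linarith) (hnn s)))
      (((measurable_id'.sub measurable_const).mul hm).aestronglyMeasurable),
    integral_eq_lintegral_of_nonneg_ae (ae_of_all _ hGnn)
      (hGanti.measurable.aestronglyMeasurable)]
  congr 1
  calc ∫⁻ s in Ioi x, ENNReal.ofReal ((s - x) * p s)
      = ∫⁻ s in Ioi x, ∫⁻ u in Ioi x, (Iio s).indicator (fun _ => ENNReal.ofReal (p s)) u := by
        refine setLIntegral_congr_fun measurableSet_Ioi (fun s hs => ?_)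
        rw [lintegral_indicator measurableSet_Iio, setLIntegral_const,
          Measure.restrict_apply measurableSet_Iio]
        have : Iio s ∩ Ioi x = Ioo x s := by ext t; simp [mem_Ioo, and_comm]
        rw [this, Real.volume_Ioo, ← ENNReal.ofReal_mul (hnn s), mul_comm]
    _ = ∫⁻ u in Ioi x, ∫⁻ s in Ioi x, (Iio s).indicator (fun _ => ENNReal.ofReal (p s)) u := by
        refine lintegral_lintegral_swap ?_
        have : (Function.uncurry fun s u => (Iio s).indicator (fun _ => ENNReal.ofReal (p s)) u)
            = {q : ℝ × ℝ | q.2 < q.1}.indicator (fun q => ENNReal.ofReal (p q.1)) := by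
          funext q
          simp [Function.uncurry, Set.indicator_apply, mem_Iio]
        rw [this]
        exact ((ENNReal.measurable_ofReal.comp (hm.comp measurable_fst)).indicator
          (measurableSet_lt measurable_snd measurable_fst)).aemeasurable
    _ = ∫⁻ u in Ioi x, ENNReal.ofReal (∫ t in Ioi u, p t) := by
        refine setLIntegral_congr_fun measurableSet_Ioi (fun u hu => ?_)
        have h1 : ∀ s, (Iio s).indicator (fun _ => ENNReal.ofReal (p s)) u
            = (Ioi u).indicator (fun s => ENNReal.ofReal (p s)) s := by
          intro s; simp [Set.indicator_apply, mem_Ioi, mem_Iio]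
        simp_rw [h1]
        rw [lintegral_indicator measurableSet_Ioi, Measure.restrict_restrict measurableSet_Ioi,
          inter_eq_self_of_subset_left (Ioi_subset_Ioi (le_of_lt hu)),
          ← ofReal_integral_eq_lintegral_ofReal hi.integrableOn (ae_of_all _ hnn)]

set_option maxHeartbeats 2000000 in
/-- For the linear coefficient `γ(x) = c(E[Z] - x)`, `c > 0`, and Lipschitz `h`:
(a) `‖g_h‖ ≤ ‖h'‖/c`;
(b) `|g_h'(x)| ≤ 2c ‖h'‖ (∫_a^x F)(∫_x^b (1-F)) / (η(x)² p(x))`. -/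
theorem cor_gsol_linear_gamma (a b : EReal) (p : ℝ → ℝ) (c : ℝ) (hc : 0 < c)
    (h1 : Cond1 a b p)
    (hmom : MeasureTheory.Integrable (fun x => x * p x)) :
    ∀ (h : ℝ → ℝ) (L : NNReal), LipschitzOnWith L h (ccE a b) →
      (∀ x ∈ ooE a b,
        |gsol (fun y => c * ((∫ z, z * p z) - y)) p h x| ≤ L / c) ∧
      (∀ x ∈ ooE a b,
        |gsol' (fun y => c * ((∫ z, z * p z) - y)) p h x| ≤
          2 * c * L * (∫ s in Iic x, Ffun p s) * (∫ t in Ioi x, (1 - Ffun p t)) /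
            ((etaFun (fun y => c * ((∫ z, z * p z) - y)) p x) ^ 2 * p x)) := by
  intro h L hLip
  obtain ⟨g, hglip, hgeq⟩ := hLip.extend_real
  have ip := h1.integrable
  have hpnn := h1.nonneg
  have hpm := h1.meas
  set μR := ∫ z, z * p z with hμR
  set γ : ℝ → ℝ := fun y => c * (μR - y) with hγ
  have hooE_cc : ooE a b ⊆ ccE a b := fun t ht => ⟨le_of_lt ht.1, le_of_lt ht.2⟩
  have hps : ∀ t, h t * p t = g t * p t := by
    intro t
    by_cases ht : t ∈ ooE a b
    · rw [hgeq (hooE_cc ht)]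
    · rw [h1.zero t ht, mul_zero, mul_zero]
  have hgm : Measurable g := hglip.continuous.measurable
  have hig : Integrable (fun t => g t * p t) := by
    refine Integrable.mono' ((ip.const_mul |g 0|).add (hmom.abs.const_mul L))
      ((hgm.mul hpm).aestronglyMeasurable) (ae_of_all _ fun t => ?_)
    have hd : |g t - g 0| ≤ (L : ℝ) * |t - 0| := by
      have := hglip.dist_le_mul t 0
      rwa [Real.dist_eq, Real.dist_eq] at this
    have hgb : |g t| ≤ |g 0| + (L : ℝ) * |t| := by
      have := abs_sub_abs_le_abs_sub (g t) (g 0)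
      simp only [sub_zero] at hd
      linarith
    calc ‖g t * p t‖ = |g t| * p t := by
          rw [norm_mul, Real.norm_eq_abs, Real.norm_eq_abs, abs_of_nonneg (hpnn t)]
      _ ≤ (|g 0| + (L : ℝ) * |t|) * p t := mul_le_mul_of_nonneg_right hgb (hpnn t)
      _ = |g 0| * p t + (L : ℝ) * |t * p t| := by
          rw [abs_mul, abs_of_nonneg (hpnn t)]; ring
  have hm_eq : meanOf p h = meanOf p g := by
    simp only [meanOf]
    exact integral_congr_ae (ae_of_all _ hps)
  set m := meanOf p g with hm
  have main : ∀ x ∈ ooE a b, |gsol γ p h x| ≤ (L : ℝ) / c ∧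
      |gsol' γ p h x| ≤ 2 * c * (L : ℝ) * (∫ s in Iic x, Ffun p s) *
        (∫ t in Ioi x, (1 - Ffun p t)) / ((etaFun γ p x) ^ 2 * p x) := by
    intro x hx
    obtain ⟨hax, hxb⟩ := hx
    obtain ⟨a', haa', ha'x⟩ : ∃ a' : ℝ, a < (a' : EReal) ∧ a' < x := by
      obtain ⟨z, h1z, h2z⟩ := exists_between hax
      lift z to ℝ using ⟨(h2z.trans (EReal.coe_lt_top x)).ne, (bot_le.trans_lt h1z).ne'⟩
      exact ⟨z, h1z, by exact_mod_cast h2z⟩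
    obtain ⟨b', hxb', hb'b⟩ : ∃ b' : ℝ, x < b' ∧ (b' : EReal) < b := by
      obtain ⟨z, h1z, h2z⟩ := exists_between hxb
      lift z to ℝ using ⟨(h2z.trans_le le_top).ne.lt_of_le le_top |>.ne, ((EReal.bot_lt_coe x).trans h1z).ne'⟩
      exact ⟨z, by exact_mod_cast h1z, h2z⟩
    -- pointwise positivity on subintervals
    have hsubI : Ioo a' x ⊆ ooE a b := fun t ht =>
      ⟨haa'.trans (by exact_mod_cast ht.1), lt_trans (by exact_mod_cast ht.2) hxb⟩
    have hsubO : Ioo x b' ⊆ ooE a b := fun t ht =>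
      ⟨hax.trans (by exact_mod_cast ht.1), lt_trans (by exact_mod_cast ht.2) hb'b⟩
    have hpx : 0 < p x := h1.pos x ⟨hax, hxb⟩
    -- integrability of the various integrands
    have hiA : Integrable (fun t => (x - t) * p t) := by
      have e : (fun t => (x - t) * p t) = fun t => x * p t - t * p t := by funext t; ring
      rw [e]; exact (ip.const_mul x).sub hmom
    have hiB : Integrable (fun t => (t - x) * p t) := by
      have e : (fun t => (t - x) * p t) = fun t => t * p t - x * p t := by funext t; ring
      rw [e]; exact hmom.sub (ip.const_mul x)
    have hiAg : Integrable (fun t => (g x - g t) * p t) := by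
      have e : (fun t => (g x - g t) * p t) = fun t => g x * p t - g t * p t := by
        funext t; ring
      rw [e]; exact (ip.const_mul (g x)).sub hig
    have hiBg : Integrable (fun t => (g t - g x) * p t) := by
      have e : (fun t => (g t - g x) * p t) = fun t => g t * p t - g x * p t := by
        funext t; ring
      rw [e]; exact hig.sub (ip.const_mul (g x))
    have hiN : Integrable (fun t => (g t - m) * p t) := by
      have e : (fun t => (g t - m) * p t) = fun t => g t * p t - m * p t := by
        funext t; ring
      rw [e]; exact hig.sub (ip.const_mul m)
    -- the basic quantities
    set Fx := Ffun p x with hFxdef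
    set Gx := ∫ t in Ioi x, p t with hGxdef
    set TI := ∫ t in Iic x, t * p t with hTI
    set TO := ∫ t in Ioi x, t * p t with hTO
    set HI := ∫ t in Iic x, g t * p t with hHI
    set HO := ∫ t in Ioi x, g t * p t with hHO
    -- splitting identities
    have hFG : Fx + Gx = 1 := by
      rw [hFxdef, hGxdef]
      rw [show Ffun p x = ∫ t in Iic x, p t from rfl]
      rw [intervalIntegral.integral_Iic_add_Ioi ip.integrableOn ip.integrableOn]
      exact h1.total
    have hTT : TI + TO = μR :=
      intervalIntegral.integral_Iic_add_Ioi hmom.integrableOn hmom.integrableOn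
    have hHH : HI + HO = m :=
      intervalIntegral.integral_Iic_add_Ioi hig.integrableOn hig.integrableOn
    -- integral computations
    have eA : ∫ t in Iic x, (g x - g t) * p t = g x * Fx - HI := by
      have e : (fun t => (g x - g t) * p t) = fun t => g x * p t - g t * p t := by
        funext t; ring
      rw [e, integral_sub (ip.integrableOn.const_mul (g x)) hig.integrableOn,
        integral_const_mul]
      rfl
    have eAh : ∫ t in Iic x, (x - t) * p t = x * Fx - TI := by
      have e : (fun t => (x - t) * p t) = fun t => x * p t - t * p t := by funext t; ring
      rw [e, integral_sub (ip.integrableOn.const_mul x) hmom.integrableOn,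
        integral_const_mul]
      rfl
    have eB : ∫ t in Ioi x, (g t - g x) * p t = HO - g x * Gx := by
      have e : (fun t => (g t - g x) * p t) = fun t => g t * p t - g x * p t := by
        funext t; ring
      rw [e, integral_sub hig.integrableOn (ip.integrableOn.const_mul (g x)),
        integral_const_mul]
    have eBh : ∫ t in Ioi x, (t - x) * p t = TO - x * Gx := by
      have e : (fun t => (t - x) * p t) = fun t => t * p t - x * p t := by funext t; ring
      rw [e, integral_sub hmom.integrableOn (ip.integrableOn.const_mul x),
        integral_const_mul]
    have eN : ∫ t in Iic x, (g t - m) * p t = HI - m * Fx := by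
      have e : (fun t => (g t - m) * p t) = fun t => g t * p t - m * p t := by
        funext t; ring
      rw [e, integral_sub hig.integrableOn (ip.integrableOn.const_mul m),
        integral_const_mul]
      rfl
    have eI : Ifun γ p x = c * (μR * Fx - TI) := by
      simp only [Ifun, hγ]
      have e : (fun t => (c * (μR - t)) * p t) = fun t => c * μR * p t - c * (t * p t) := by
        funext t; ring
      rw [e, integral_sub (ip.integrableOn.const_mul (c * μR))
        (hmom.integrableOn.const_mul c), integral_const_mul, integral_const_mul]
      rw [show (∫ t in Iic x, p t) = Fx from rfl]
      ring
    -- positivity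
    have hFpos : 0 < Fx := by
      rw [hFxdef, show Ffun p x = ∫ t in Iic x, p t from rfl]
      exact pos_aux measurableSet_Iic ip.integrableOn (fun t _ => hpnn t) ha'x
        (fun t ht => le_of_lt ht.2) (fun t ht => h1.pos t (hsubI ht))
    have hGpos : 0 < Gx := by
      rw [hGxdef]
      exact pos_aux measurableSet_Ioi ip.integrableOn (fun t _ => hpnn t) hxb'
        (fun t ht => ht.1) (fun t ht => h1.pos t (hsubO ht))
    have hApos : 0 < x * Fx - TI := by
      rw [← eAh]
      refine pos_aux measurableSet_Iic hiA.integrableOn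
        (fun t ht => mul_nonneg (by simp only [mem_Iic] at ht; linarith) (hpnn t)) ha'x
        (fun t ht => le_of_lt ht.2) (fun t ht => mul_pos (by linarith [ht.2]) (h1.pos t (hsubI ht)))
    have hBpos : 0 < TO - x * Gx := by
      rw [← eBh]
      refine pos_aux measurableSet_Ioi hiB.integrableOn
        (fun t ht => mul_nonneg (by simp only [mem_Ioi] at ht; linarith) (hpnn t)) hxb'
        (fun t ht => ht.1) (fun t ht => mul_pos (by linarith [ht.1]) (h1.pos t (hsubO ht)))
    have hGx1 : Gx = 1 - Fx := by linarith
    have hIval : Ifun γ p x = c * (Gx * (x * Fx - TI) + Fx * (TO - x * Gx)) := by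
      rw [eI, ← hTT, hGx1]; ring
    have hIpos : 0 < Ifun γ p x := by
      rw [hIval]
      exact mul_pos hc (by nlinarith)
    have hIne : Ifun γ p x ≠ 0 := ne_of_gt hIpos
    have hpxne : p x ≠ 0 := ne_of_gt hpx
    -- Lipschitz bounds
    have hAbd : |g x * Fx - HI| ≤ (L : ℝ) * (x * Fx - TI) := by
      rw [← eA]
      calc |∫ t in Iic x, (g x - g t) * p t| ≤ ∫ t in Iic x, |g x - g t| * |p t| := by
            simpa [Real.norm_eq_abs, abs_mul] using
              norm_integral_le_integral_norm (μ := volume.restrict (Iic x))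
                (fun t => (g x - g t) * p t)
        _ ≤ ∫ t in Iic x, (L : ℝ) * ((x - t) * p t) := by
            refine setIntegral_mono_on (hiAg.abs.congr (ae_of_all _ fun t => by
                simp [abs_mul])).integrableOn
              (hiA.integrableOn.const_mul (L : ℝ)) measurableSet_Iic (fun t ht => ?_)
            simp only [mem_Iic] at ht
            rw [abs_of_nonneg (hpnn t)]
            have hd : |g x - g t| ≤ (L : ℝ) * |x - t| := by
              have := hglip.dist_le_mul x t
              rwa [Real.dist_eq, Real.dist_eq] at this
            rw [abs_of_nonneg (by linarith : (0:ℝ) ≤ x - t)] at hd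
            nlinarith [hpnn t, mul_le_mul_of_nonneg_right hd (hpnn t)]
        _ = (L : ℝ) * (x * Fx - TI) := by rw [integral_const_mul, eAh]
    have hBbd : |HO - g x * Gx| ≤ (L : ℝ) * (TO - x * Gx) := by
      rw [← eB]
      calc |∫ t in Ioi x, (g t - g x) * p t| ≤ ∫ t in Ioi x, |g t - g x| * |p t| := by
            simpa [Real.norm_eq_abs, abs_mul] using
              norm_integral_le_integral_norm (μ := volume.restrict (Ioi x))
                (fun t => (g t - g x) * p t)
        _ ≤ ∫ t in Ioi x, (L : ℝ) * ((t - x) * p t) := by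
            refine setIntegral_mono_on (hiBg.abs.congr (ae_of_all _ fun t => by
                simp [abs_mul])).integrableOn
              (hiB.integrableOn.const_mul (L : ℝ)) measurableSet_Ioi (fun t ht => ?_)
            simp only [mem_Ioi] at ht
            rw [abs_of_nonneg (hpnn t)]
            have hd : |g t - g x| ≤ (L : ℝ) * |t - x| := by
              have := hglip.dist_le_mul t x
              rwa [Real.dist_eq, Real.dist_eq] at this
            rw [abs_of_nonneg (by linarith : (0:ℝ) ≤ t - x)] at hd
            nlinarith [hpnn t, mul_le_mul_of_nonneg_right hd (hpnn t)]
        _ = (L : ℝ) * (TO - x * Gx) := by rw [integral_const_mul, eBh]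
    -- value of gsol
    have hint2 : (fun t => (h t - meanOf p h) * p t) = fun t => (g t - m) * p t := by
      funext t
      rw [hm_eq]
      linear_combination hps t
    have hden1 : p x * etaFun γ p x = Ifun γ p x := by
      simp only [etaFun]; field_simp
    have hgsolval : gsol γ p h x = (HI - m * Fx) / Ifun γ p x := by
      simp only [gsol]
      rw [hint2, eN, hden1]
    -- part (a)
    have hNbd : |HI - m * Fx| ≤ (L : ℝ) * (Gx * (x * Fx - TI) + Fx * (TO - x * Gx)) := by
      have hNval : HI - m * Fx = -(Gx * (g x * Fx - HI) + Fx * (HO - g x * Gx)) := by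
        rw [← hHH, hGx1]; ring
      rw [hNval, abs_neg]
      calc |Gx * (g x * Fx - HI) + Fx * (HO - g x * Gx)|
          ≤ Gx * |g x * Fx - HI| + Fx * |HO - g x * Gx| := by
            refine (abs_add_le _ _).trans ?_
            rw [abs_mul, abs_mul, abs_of_pos hGpos, abs_of_pos hFpos]
        _ ≤ Gx * ((L:ℝ) * (x * Fx - TI)) + Fx * ((L:ℝ) * (TO - x * Gx)) :=
            add_le_add (mul_le_mul_of_nonneg_left hAbd hGpos.le)
              (mul_le_mul_of_nonneg_left hBbd hFpos.le)
        _ = (L : ℝ) * (Gx * (x * Fx - TI) + Fx * (TO - x * Gx)) := by ring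
    have parta : |gsol γ p h x| ≤ (L : ℝ) / c := by
      rw [hgsolval, abs_div, abs_of_pos hIpos, div_le_div_iff₀ hIpos hc, hIval]
      nlinarith [mul_le_mul_of_nonneg_right hNbd hc.le]
    -- part (b)
    have eAh' : (∫ s in Iic x, Ffun p s) = x * Fx - TI := by
      simp only [Ffun]
      rw [← fubini_Iic x p hpm hpnn ip, eAh]
    have eBh' : (∫ t in Ioi x, (1 - Ffun p t)) = TO - x * Gx := by
      simp only [Ffun]
      rw [← fubini_Ioi x p hpm hpnn ip h1.total, eBh]
    have hIne2 : c * ((1 - Fx) * (x * Fx - TI) + Fx * (TO - x * (1 - Fx))) ≠ 0 := by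
      have := hIne; rw [hIval, hGx1] at this; exact this
    have hgsol'val : gsol' γ p h x = c * p x *
        ((g x * Fx - HI) * (TO - x * Gx) - (x * Fx - TI) * (HO - g x * Gx)) /
          (Ifun γ p x)^2 := by
      simp only [gsol']
      rw [hgsolval, hm_eq, hgeq ⟨hax.le, hxb.le⟩]
      simp only [etaFun, hγ]
      rw [hIval, ← hHH, ← hTT, hGx1]
      have hD : (1 - Fx) * (x * Fx - TI) + Fx * (TO - x * (1 - Fx)) ≠ 0 := by
        intro h0; apply hIne2; rw [h0, mul_zero]
      field_simp
      ring
    have hKbd : |(g x * Fx - HI) * (TO - x * Gx) - (x * Fx - TI) * (HO - g x * Gx)|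
        ≤ 2 * (L : ℝ) * ((x * Fx - TI) * (TO - x * Gx)) := by
      calc |(g x * Fx - HI) * (TO - x * Gx) - (x * Fx - TI) * (HO - g x * Gx)|
          ≤ |(g x * Fx - HI) * (TO - x * Gx)| + |(x * Fx - TI) * (HO - g x * Gx)| :=
            abs_sub _ _
        _ = |g x * Fx - HI| * (TO - x * Gx) + (x * Fx - TI) * |HO - g x * Gx| := by
            rw [abs_mul, abs_mul, abs_of_pos hBpos, abs_of_pos hApos]
        _ ≤ ((L:ℝ) * (x * Fx - TI)) * (TO - x * Gx) + (x * Fx - TI) * ((L:ℝ) * (TO - x * Gx)) :=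
            add_le_add (mul_le_mul_of_nonneg_right hAbd hBpos.le)
              (mul_le_mul_of_nonneg_left hBbd hApos.le)
        _ = 2 * (L:ℝ) * ((x * Fx - TI) * (TO - x * Gx)) := by ring
    have partb : |gsol' γ p h x| ≤ 2 * c * (L : ℝ) * (∫ s in Iic x, Ffun p s) *
        (∫ t in Ioi x, (1 - Ffun p t)) / ((etaFun γ p x) ^ 2 * p x) := by
      rw [eAh', eBh', hgsol'val]
      have hden : (etaFun γ p x) ^ 2 * p x = (Ifun γ p x)^2 / p x := by
        simp only [etaFun]; field_simp
      rw [hden, div_div_eq_mul_div, abs_div, abs_mul, abs_mul, abs_of_pos hc,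
        abs_of_pos hpx, abs_of_pos (pow_pos hIpos 2)]
      rw [div_le_div_iff₀ (pow_pos hIpos 2) (pow_pos hIpos 2)]
      nlinarith [mul_le_mul_of_nonneg_left hKbd (mul_pos hc hpx).le,
        pow_pos hIpos 2, (pow_pos hIpos 2).le]
    exact ⟨parta, partb⟩
  exact ⟨fun x hx => (main x hx).1, fun x hx => (main x hx).2⟩


end
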